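/- arXiv:1210.1548 — 3 statements merged into one kernel-verified Lean document; each statement's English description precedes it below -/
import Mathlib

section
/- If a sequence (B_n) of Borel subsets of a standard probability space is asymptotically invariant for a measure-preserving countable Borel equivalence relation R (i.e., μ(φ(B_n) Δ B_n) → 0 for every φ in the full group [R]), then for every Borel map φ : Y → Y whose graph is contained in R (not necessarily bijective), μ(φ⁻¹(B_n) Δ B_n) → 0. -/
open MeasureTheory ProbabilityTheory Filter Topology Set

/-- Given a Borel set `P` on which `φ` is injective and whose image is disjoint from it,
there is a measurable involution of the whole space agreeing with `φ` on `P`, and which is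
either the identity, or `φ`, or a partial inverse of `φ`, pointwise. -/
lemma exists_swap_involution {Y : Type*} [MeasurableSpace Y] [StandardBorelSpace Y]
    (φ : Y → Y) (hφ : Measurable φ) (P : Set Y) (hP : MeasurableSet P)
    (hinj : Set.InjOn φ P) (hdisj : Disjoint P (φ '' P)) :
    ∃ ψ : Y ≃ᵐ Y, Function.Involutive ⇑ψ ∧ (∀ y ∈ P, ψ y = φ y) ∧
      (∀ y, ψ y = y ∨ (ψ y = φ y) ∨ ((ψ y ∈ P) ∧ φ (ψ y) = y)) := by
  classical
  haveI : StandardBorelSpace P := hP.standardBorel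
  set f : P → Y := fun x => φ x with hf_def
  have hfmeas : Measurable f := hφ.comp measurable_subtype_coe
  have hfinj : Function.Injective f := by
    rintro ⟨x, hx⟩ ⟨y, hy⟩ h
    exact Subtype.ext (hinj hx hy h)
  have hfe : MeasurableEmbedding f := hfmeas.measurableEmbedding hfinj
  have hQmeas : MeasurableSet (Set.range f) := hfe.measurableSet_range
  have hQeq : Set.range f = φ '' P := by
    ext y; constructor
    · rintro ⟨x, rfl⟩; exact ⟨x, x.2, rfl⟩
    · rintro ⟨x, hx, rfl⟩; exact ⟨⟨x, hx⟩, rfl⟩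
  set g : Y → Y := fun y => if hy : y ∈ Set.range f then Subtype.val (Set.rangeSplitting f ⟨y, hy⟩) else y
    with hg_def
  have hgmeas : Measurable g := by
    have h1 : Measurable (fun q : Set.range f => Subtype.val (Set.rangeSplitting f q)) :=
      measurable_subtype_coe.comp hfe.measurable_rangeSplitting
    have h2 : Measurable (fun y : ↑(Set.range f)ᶜ => (y : Y)) := measurable_subtype_coe
    exact Measurable.dite h1 h2 hQmeas
  have hg1 : ∀ y (hy : y ∈ Set.range f), g y ∈ P ∧ φ (g y) = y := by
    intro y hy
    have : g y = Subtype.val (Set.rangeSplitting f ⟨y, hy⟩) := by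
      simp only [hg_def]; rw [dif_pos hy]
    rw [this]
    refine ⟨(Set.rangeSplitting f ⟨y, hy⟩).2, ?_⟩
    have := Set.apply_rangeSplitting f ⟨y, hy⟩
    simpa [hf_def] using this
  have hg2 : ∀ x ∈ P, g (φ x) = x := by
    intro x hx
    have hmem : φ x ∈ Set.range f := ⟨⟨x, hx⟩, rfl⟩
    obtain ⟨h1, h2⟩ := hg1 (φ x) hmem
    exact hinj h1 hx h2
  set j : Y → Y := P.piecewise φ g with hj_def
  have hjmeas : Measurable j := Measurable.piecewise hP hφ hgmeas
  have hjP : ∀ y ∈ P, j y = φ y := fun y hy => Set.piecewise_eq_of_mem _ _ _ hy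
  have hjQ : ∀ y ∈ Set.range f, j y = g y := by
    intro y hy
    have : y ∉ P := fun hyP => (hdisj.ne_of_mem hyP (hQeq ▸ hy)) rfl
    exact Set.piecewise_eq_of_notMem _ _ _ this
  have hjo : ∀ y, y ∉ P → y ∉ Set.range f → j y = y := by
    intro y hyP hyQ
    have h1 : j y = g y := Set.piecewise_eq_of_notMem _ _ _ hyP
    rw [h1, hg_def]
    exact dif_neg hyQ
  have hinvol : Function.Involutive j := by
    intro y
    by_cases hyP : y ∈ P
    · rw [hjP y hyP]
      have hmem : φ y ∈ Set.range f := ⟨⟨y, hyP⟩, rfl⟩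
      rw [hjQ _ hmem]
      exact hg2 y hyP
    · by_cases hyQ : y ∈ Set.range f
      · rw [hjQ y hyQ]
        obtain ⟨h1, h2⟩ := hg1 y hyQ
        rw [hjP _ h1, h2]
      · rw [hjo y hyP hyQ, hjo y hyP hyQ]
  refine ⟨⟨⟨j, j, hinvol.leftInverse, hinvol.rightInverse⟩, hjmeas, hjmeas⟩,
    hinvol, fun y hy => hjP y hy, ?_⟩
  intro y
  by_cases hyP : y ∈ P
  · exact Or.inr (Or.inl (hjP y hyP))
  · by_cases hyQ : y ∈ Set.range f
    · refine Or.inr (Or.inr ?_)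
      have := hjQ y hyQ
      obtain ⟨h1, h2⟩ := hg1 y hyQ
      constructor
      · show j y ∈ P; rw [this]; exact h1
      · show φ (j y) = y; rw [this]; exact h2
    · exact Or.inl (hjo y hyP hyQ)

lemma measurable_kernel_section' {Y : Type*} [MeasurableSpace Y]
    (κ : Kernel Y Y) [IsSFiniteKernel κ]
    {S : Set (Y × Y)} (hS : MeasurableSet S) :
    Measurable (fun p : Y × Y => κ p.1 {y' | (p.2, y') ∈ S}) := by
  have ht : MeasurableSet {q : (Y × Y) × Y | (q.1.2, q.2) ∈ S} :=
    ((measurable_fst.snd).prodMk measurable_snd) hS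
  have h := Kernel.measurable_kernel_prodMk_left
    (κ := κ.comap Prod.fst measurable_fst) ht
  simp only [Kernel.comap_apply] at h
  exact h

set_option linter.unusedVariables false in
/-- If a sequence `(B n)` of Borel subsets of a standard probability
space is asymptotically invariant for a measure-preserving countable Borel equivalence
relation `R` (i.e. `μ (φ '' B n ∆ B n) → 0` for every `φ` in the full group `[R]`),
then for every Borel map `φ : Y → Y` whose graph is contained in `R` (not necessarily
bijective), `μ (φ ⁻¹' B n ∆ B n) → 0`. -/
theorem asymptotically_invariant_of_full_group_for_graph_maps
    {Y : Type*} [MeasurableSpace Y] [StandardBorelSpace Y]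
    (μ : Measure Y) [IsProbabilityMeasure μ]
    (R : Y → Y → Prop) (hR : Equivalence R)
    (hcount : ∀ y, {z | R y z}.Countable)
    (hmeasR : MeasurableSet {p : Y × Y | R p.1 p.2})
    (hpres : ∀ φ : Y ≃ᵐ Y, (∀ y, R y (φ y)) → MeasurePreserving φ μ μ)
    (B : ℕ → Set Y) (hB : ∀ n, MeasurableSet (B n))
    (hai : ∀ φ : Y ≃ᵐ Y, (∀ y, R y (φ y)) →
      Tendsto (fun n => μ (symmDiff (⇑φ '' B n) (B n))) atTop (𝓝 0))
    (φ : Y → Y) (hφ : Measurable φ) (hgraph : ∀ y, R y (φ y)) :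
    Tendsto (fun n => μ (symmDiff (φ ⁻¹' B n) (B n))) atTop (𝓝 0) := by
  classical
  rcases isEmpty_or_nonempty Y with hY | hY
  · have h0 : ∀ n, μ (symmDiff (φ ⁻¹' B n) (B n)) = 0 := by
      intro n
      rw [Set.eq_empty_of_isEmpty (symmDiff (φ ⁻¹' B n) (B n)), measure_empty]
    simp only [h0]
    exact tendsto_const_nhds
  obtain ⟨e, he⟩ := MeasureTheory.exists_measurableEmbedding_real Y
  have hemeas : Measurable e := he.measurable
  have heinj : Function.Injective e := he.injective
  set ρ : MeasureTheory.Measure (Y × Y) := μ.map (fun y => (φ y, y)) with hρ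
  have hpair : Measurable fun y => (φ y, y) := hφ.prodMk measurable_id
  haveI : IsProbabilityMeasure ρ := Measure.isProbabilityMeasure_map hpair.aemeasurable
  set κ := ρ.condKernel with hκ
  have hdis : ρ.fst ⊗ₘ κ = ρ := ρ.disintegrate _
  have hSdiag : MeasurableSet {q : Y × Y | e q.2 = e q.1} :=
    measurableSet_eq_fun (hemeas.comp measurable_snd) (hemeas.comp measurable_fst)
  have hSlt : MeasurableSet {q : Y × Y | e q.2 < e q.1} :=
    measurableSet_lt (hemeas.comp measurable_snd) (hemeas.comp measurable_fst)
  set a : Y → ENNReal := fun y => κ (φ y) {y' | e y' = e y} with ha_def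
  set r : Y → ENNReal := fun y => κ (φ y) {y' | e y' < e y} with hr_def
  have hameas : Measurable a := (measurable_kernel_section' κ hSdiag).comp hpair
  have hrmeas : Measurable r := (measurable_kernel_section' κ hSlt).comp hpair
  -- Claim A : a.e. positive atom
  have hN0 : μ {y | a y = 0} = 0 := by
    set T : Set (Y × Y) := {p | κ p.1 {y' | e y' = e p.2} = 0} with hT
    have hTmeas : MeasurableSet T :=
      (measurable_kernel_section' κ hSdiag) (measurableSet_singleton 0)
    set G : Set (Y × Y) := {p | e (φ p.2) = e p.1} with hG
    have hGmeas : MeasurableSet G :=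
      measurableSet_eq_fun ((hemeas.comp hφ).comp measurable_snd) (hemeas.comp measurable_fst)
    have hμρ : μ {y | a y = 0} = ρ T := by
      rw [hρ, MeasureTheory.Measure.map_apply hpair hTmeas]
      rfl
    have hGc : ρ Gᶜ = 0 := by
      rw [hρ, MeasureTheory.Measure.map_apply hpair hGmeas.compl]
      have : (fun y => (φ y, y)) ⁻¹' Gᶜ = ∅ := by
        ext y; simp [hG]
      rw [this, measure_empty]
    have hTG : ρ (T ∩ G) = 0 := by
      rw [← hdis, MeasureTheory.Measure.compProd_apply (hTmeas.inter hGmeas)]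
      have hz : ∀ z, κ z (Prod.mk z ⁻¹' (T ∩ G)) = 0 := by
        intro z
        have hsub : (Prod.mk z ⁻¹' (T ∩ G)) ⊆ {w | R z w} := by
          intro y hy
          have h2 : e (φ y) = e z := hy.2
          have h3 : φ y = z := heinj h2
          exact hR.symm (h3 ▸ hgraph y)
        have hcnt : (Prod.mk z ⁻¹' (T ∩ G)).Countable := (hcount z).mono hsub
        have hsing : ∀ y ∈ Prod.mk z ⁻¹' (T ∩ G), κ z ({y} : Set Y) = 0 := by
          intro y hy
          have h1 : κ z {y' | e y' = e y} = 0 := hy.1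
          have h2 : ({y} : Set Y) ⊆ {y' | e y' = e y} := by
            intro w hw
            simp only [Set.mem_singleton_iff] at hw
            simp [hw]
          exact le_antisymm ((measure_mono h2).trans h1.le) zero_le
        rw [← Set.biUnion_of_singleton (Prod.mk z ⁻¹' (T ∩ G))]
        exact (measure_biUnion_null_iff hcnt).2 hsing
      simp only [hz]
      simp
    have hle : μ {y | a y = 0} ≤ 0 := by
      rw [hμρ]
      calc ρ T ≤ ρ ((T ∩ G) ∪ Gᶜ) := by
            apply measure_mono
            intro p hp
            by_cases hpG : p ∈ G
            · exact Or.inl ⟨hp, hpG⟩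
            · exact Or.inr hpG
        _ ≤ ρ (T ∩ G) + ρ Gᶜ := measure_union_le _ _
        _ = 0 := by rw [hTG, hGc, add_zero]
    exact le_antisymm hle zero_le
  -- key monotonicity of the rank function along a fiber
  have hkey : ∀ y y', φ y = φ y' → e y < e y' → r y + a y ≤ r y' := by
    intro y y' hφeq hlt
    have hdisj2 : Disjoint {w : Y | e w < e y} {w : Y | e w = e y} := by
      rw [Set.disjoint_left]
      intro w hw1 hw2
      simp only [Set.mem_setOf_eq] at hw1 hw2
      rw [hw2] at hw1
      exact lt_irrefl _ hw1
    have hmeas2 : MeasurableSet {w : Y | e w = e y} := by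
      have hsingle : {w : Y | e w = e y} = ({y} : Set Y) := by
        ext w
        simp only [Set.mem_setOf_eq, Set.mem_singleton_iff]
        exact ⟨fun h => heinj h, fun h => by rw [h]⟩
      rw [hsingle]
      exact measurableSet_singleton y
    have hsub : {w : Y | e w < e y} ∪ {w : Y | e w = e y} ⊆ {w : Y | e w < e y'} := by
      intro w hw
      rcases hw with hw | hw
      · exact lt_trans hw hlt
      · simp only [Set.mem_setOf_eq] at hw ⊢
        rw [hw]
        exact hlt
    calc r y + a y = κ (φ y') {w | e w < e y} + κ (φ y') {w | e w = e y} := by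
          rw [hr_def, ha_def]
          simp only []
          rw [hφeq]
      _ = κ (φ y') ({w | e w < e y} ∪ {w | e w = e y}) := (measure_union hdisj2 hmeas2).symm
      _ ≤ κ (φ y') {w | e w < e y'} := measure_mono hsub
      _ = r y' := rfl
  -- the injectivity pieces
  set A : ℚ → ℕ → Set Y := fun q k =>
    {y | ENNReal.ofReal q ≤ r y ∧ r y < ENNReal.ofReal q + (k : ENNReal)⁻¹ ∧ (k : ENNReal)⁻¹ < a y}
    with hA_def
  have hAmeas : ∀ q k, MeasurableSet (A q k) := by
    intro q k
    have h1 : MeasurableSet {y | ENNReal.ofReal q ≤ r y} := hrmeas measurableSet_Ici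
    have h2 : MeasurableSet {y | r y < ENNReal.ofReal q + (k : ENNReal)⁻¹} := hrmeas measurableSet_Iio
    have h3 : MeasurableSet {y | (k : ENNReal)⁻¹ < a y} := hameas measurableSet_Ioi
    exact h1.inter (h2.inter h3)
  have hAinj : ∀ q k, Set.InjOn φ (A q k) := by
    intro q k y hy y' hy' hφeq
    by_contra hne
    have hene : e y ≠ e y' := fun h => hne (heinj h)
    rcases hene.lt_or_gt with hlt | hlt
    · have h1 := hkey y y' hφeq hlt
      have h2 : ENNReal.ofReal q + (k : ENNReal)⁻¹ < r y + a y := by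
        calc ENNReal.ofReal q + (k : ENNReal)⁻¹ ≤ r y + (k : ENNReal)⁻¹ :=
              add_le_add_left hy.1 _
          _ < r y + a y := ENNReal.add_lt_add_left (measure_ne_top _ _) hy.2.2
      exact lt_irrefl _ ((h2.trans_le h1).trans hy'.2.1)
    · have h1 := hkey y' y hφeq.symm hlt
      have h2 : ENNReal.ofReal q + (k : ENNReal)⁻¹ < r y' + a y' := by
        calc ENNReal.ofReal q + (k : ENNReal)⁻¹ ≤ r y' + (k : ENNReal)⁻¹ :=
              add_le_add_left hy'.1 _
          _ < r y' + a y' := ENNReal.add_lt_add_left (measure_ne_top _ _) hy'.2.2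
      exact lt_irrefl _ ((h2.trans_le h1).trans hy.2.1)
  -- window pieces
  set W : ℚ → Bool → Set Y := fun s b =>
    bif b then {y | e y < (s : ℝ) ∧ (s : ℝ) < e (φ y)}
    else {y | e (φ y) < (s : ℝ) ∧ (s : ℝ) < e y} with hW_def
  have hWmeas : ∀ s b, MeasurableSet (W s b) := by
    intro s b
    cases b
    · exact ((measurableSet_lt (hemeas.comp hφ) measurable_const).inter
        (measurableSet_lt measurable_const hemeas))
    · exact ((measurableSet_lt hemeas measurable_const).inter
        (measurableSet_lt measurable_const (hemeas.comp hφ)))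
  set P : ℚ × ℕ × ℚ × Bool → Set Y := fun i => A i.1 i.2.1 ∩ W i.2.2.1 i.2.2.2 with hP_def
  have hPmeas : ∀ i, MeasurableSet (P i) := fun i => (hAmeas _ _).inter (hWmeas _ _)
  have hPinj : ∀ i, Set.InjOn φ (P i) := fun i => (hAinj _ _).mono Set.inter_subset_left
  have hPdisj : ∀ i, Disjoint (P i) (φ '' P i) := by
    intro i
    rw [Set.disjoint_left]
    rintro y hy ⟨w, hw, rfl⟩
    obtain ⟨i1, i2, i3, i4⟩ := i
    cases i4
    · have h1 : e (φ (φ w)) < (i3 : ℝ) ∧ (i3 : ℝ) < e (φ w) := hy.2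
      have h2 : e (φ w) < (i3 : ℝ) ∧ (i3 : ℝ) < e w := hw.2
      exact lt_irrefl _ (h1.2.trans h2.1)
    · have h1 : e (φ w) < (i3 : ℝ) ∧ (i3 : ℝ) < e (φ (φ w)) := hy.2
      have h2 : e w < (i3 : ℝ) ∧ (i3 : ℝ) < e (φ w) := hw.2
      exact lt_irrefl _ (h2.2.trans h1.1)
  -- involutions for the pieces
  have hswap : ∀ i, ∃ ψ : Y ≃ᵐ Y, Function.Involutive ⇑ψ ∧ (∀ y ∈ P i, ψ y = φ y) ∧
      (∀ y, ψ y = y ∨ (ψ y = φ y) ∨ ((ψ y ∈ P i) ∧ φ (ψ y) = y)) :=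
    fun i => exists_swap_involution φ hφ (P i) (hPmeas i) (hPinj i) (hPdisj i)
  choose ψ0 hψ0a hψ0b hψ0c using hswap
  set Zfix : Set Y := {y | e (φ y) = e y} with hZfix_def
  set Ψ : Option (ℚ × ℕ × ℚ × Bool) → Y ≃ᵐ Y :=
    fun i => i.elim (MeasurableEquiv.refl Y) ψ0 with hΨ_def
  set Z : Option (ℚ × ℕ × ℚ × Bool) → Set Y := fun i => i.elim Zfix P with hZ_def
  have hΨeq : ∀ i, ∀ y ∈ Z i, Ψ i y = φ y := by
    rintro (_ | i) y hy
    · have h1 : (MeasurableEquiv.refl Y) y = y := rfl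
      have h2 : φ y = y := heinj hy
      rw [show Ψ none = MeasurableEquiv.refl Y from rfl, h1, h2]
    · exact hψ0b i y hy
  have hΨgraph : ∀ i y, R y (Ψ i y) := by
    rintro (_ | i) y
    · exact hR.refl y
    · rcases hψ0c i y with h | h | ⟨h1, h2⟩
      · rw [show Ψ (some i) = ψ0 i from rfl, h]
        exact hR.refl y
      · rw [show Ψ (some i) = ψ0 i from rfl, h]
        exact hgraph y
      · have h3 := hgraph (ψ0 i y)
        rw [h2] at h3
        exact hR.symm h3
  have hΨinvol : ∀ i, Function.Involutive ⇑(Ψ i) := by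
    rintro (_ | i)
    · intro y
      rfl
    · exact hψ0a i
  -- coverage
  have hcover : ∀ y, a y ≠ 0 → ∃ i, y ∈ Z i := by
    intro y hay
    by_cases hfix : e (φ y) = e y
    · exact ⟨none, hfix⟩
    obtain ⟨k, hk⟩ := ENNReal.exists_inv_nat_lt hay
    have hrne : r y ≠ ⊤ := measure_ne_top _ _
    have hane : a y ≠ ⊤ := measure_ne_top _ _
    have hkne0 : ((k : ENNReal))⁻¹ ≠ 0 := ENNReal.inv_ne_zero.2 (ENNReal.natCast_ne_top k)
    have hkneT : ((k : ENNReal))⁻¹ ≠ ⊤ := ne_top_of_lt hk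
    set δ := ((k : ENNReal)⁻¹).toReal with hδ_def
    have hδpos : 0 < δ := ENNReal.toReal_pos hkne0 hkneT
    set t := (r y).toReal with ht_def
    obtain ⟨q, hq1, hq2⟩ := exists_rat_btwn (show t - δ < t by linarith)
    have hyA : y ∈ A q k := by
      refine ⟨?_, ?_, hk⟩
      · calc ENNReal.ofReal q ≤ ENNReal.ofReal t := ENNReal.ofReal_le_ofReal hq2.le
          _ = r y := ENNReal.ofReal_toReal hrne
      · have htq : t < (q : ℝ) + δ := by linarith
        have hpos : (0 : ℝ) < (q : ℝ) + δ := lt_of_le_of_lt ENNReal.toReal_nonneg htq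
        calc r y = ENNReal.ofReal t := (ENNReal.ofReal_toReal hrne).symm
          _ < ENNReal.ofReal ((q : ℝ) + δ) := (ENNReal.ofReal_lt_ofReal_iff hpos).2 htq
          _ ≤ ENNReal.ofReal q + ENNReal.ofReal δ := ENNReal.ofReal_add_le
          _ = ENNReal.ofReal q + (k : ENNReal)⁻¹ := by rw [hδ_def, ENNReal.ofReal_toReal hkneT]
    rcases (Ne.lt_or_gt hfix) with hlt | hlt
    · obtain ⟨s, hs1, hs2⟩ := exists_rat_btwn hlt
      exact ⟨some (q, k, s, false), hyA, ⟨hs1, hs2⟩⟩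
    · obtain ⟨s, hs1, hs2⟩ := exists_rat_btwn hlt
      exact ⟨some (q, k, s, true), hyA, ⟨hs1, hs2⟩⟩
  -- assemble: countable family of full-group elements covering φ a.e.
  obtain ⟨u, hu⟩ := exists_surjective_nat (Option (ℚ × ℕ × ℚ × Bool))
  have hZmeas : ∀ i, MeasurableSet (Z i) := by
    rintro (_ | i)
    · exact measurableSet_eq_fun (hemeas.comp hφ) hemeas
    · exact hPmeas i
  rw [ENNReal.tendsto_nhds_zero]
  intro ε hε
  set D : ℕ → Set Y := fun m => (⋃ i ∈ Finset.range (m + 1), Z (u i))ᶜ with hD_def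
  have hDmeas : ∀ m, MeasurableSet (D m) := fun m =>
    (Finset.measurableSet_biUnion _ fun i _ => hZmeas (u i)).compl
  have hUmono : ∀ {m m' : ℕ}, m ≤ m' →
      (⋃ i ∈ Finset.range (m + 1), Z (u i)) ⊆ ⋃ i ∈ Finset.range (m' + 1), Z (u i) := by
    intro m m' h y hy
    rw [Set.mem_iUnion₂] at hy ⊢
    obtain ⟨i, hi, hz⟩ := hy
    refine ⟨i, ?_, hz⟩
    simp only [Finset.mem_range] at hi ⊢
    omega
  have hDanti : Antitone D := fun m m' h => Set.compl_subset_compl.2 (hUmono h)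
  have hDlim := MeasureTheory.tendsto_measure_iInter_atTop
    (fun m => (hDmeas m).nullMeasurableSet) hDanti ⟨0, measure_ne_top μ _⟩
  have hDint : μ (⋂ m, D m) = 0 := by
    apply measure_mono_null ?_ hN0
    intro y hy
    simp only [hD_def, Set.mem_iInter, Set.mem_compl_iff] at hy
    simp only [Set.mem_setOf_eq]
    by_contra hay
    obtain ⟨i, hi⟩ := hcover y hay
    obtain ⟨n, rfl⟩ := hu i
    exact hy n (Set.mem_biUnion (Finset.self_mem_range_succ n) hi)
  rw [hDint] at hDlim
  obtain ⟨M, hM⟩ := ((tendsto_order.1 hDlim).2 (ε / 2) (ENNReal.half_pos hε.ne')).exists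
  have hiter : ∀ i, Tendsto (fun n => μ (symmDiff ((Ψ i) ⁻¹' B n) (B n))) atTop (𝓝 0) := by
    intro i
    have h1 := hai (Ψ i) (hΨgraph i)
    have h2 : ∀ s : Set Y, ⇑(Ψ i) '' s = ⇑(Ψ i) ⁻¹' s := fun s =>
      congrFun (Set.image_eq_preimage_of_inverse (hΨinvol i).leftInverse
        (hΨinvol i).rightInverse) s
    simpa only [h2] using h1
  have hsum : Tendsto (fun n => ∑ i ∈ Finset.range (M + 1),
      μ (symmDiff ((Ψ (u i)) ⁻¹' B n) (B n))) atTop (𝓝 0) := by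
    have h := tendsto_finset_sum (Finset.range (M + 1)) (fun i _ => hiter (u i))
    simpa using h
  have hev := (ENNReal.tendsto_nhds_zero.1 hsum) (ε / 2) (ENNReal.half_pos hε.ne')
  filter_upwards [hev] with n hn
  have hpt : ∀ i, Z i ∩ symmDiff (φ ⁻¹' B n) (B n) ⊆ symmDiff ((Ψ i) ⁻¹' B n) (B n) := by
    intro i y hy
    obtain ⟨hz, hsd⟩ := hy
    have heq2 : Ψ i y = φ y := hΨeq i y hz
    rw [Set.mem_symmDiff] at hsd ⊢
    simp only [Set.mem_preimage] at hsd ⊢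
    rw [heq2]
    exact hsd
  have hbound : μ (symmDiff (φ ⁻¹' B n) (B n)) ≤
      (∑ i ∈ Finset.range (M + 1), μ (symmDiff ((Ψ (u i)) ⁻¹' B n) (B n))) + μ (D M) := by
    have hsubset : symmDiff (φ ⁻¹' B n) (B n) ⊆
        (⋃ i ∈ Finset.range (M + 1), Z (u i) ∩ symmDiff (φ ⁻¹' B n) (B n)) ∪ D M := by
      intro y hy
      by_cases hyD : y ∈ D M
      · exact Or.inr hyD
      · left
        have hmem : y ∈ ⋃ i ∈ Finset.range (M + 1), Z (u i) := by
          by_contra hcon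
          exact hyD hcon
        rw [Set.mem_iUnion₂] at hmem ⊢
        obtain ⟨i, hi, hz⟩ := hmem
        exact ⟨i, hi, hz, hy⟩
    calc μ (symmDiff (φ ⁻¹' B n) (B n)) ≤
        μ ((⋃ i ∈ Finset.range (M + 1), Z (u i) ∩ symmDiff (φ ⁻¹' B n) (B n)) ∪ D M) :=
          measure_mono hsubset
      _ ≤ μ (⋃ i ∈ Finset.range (M + 1), Z (u i) ∩ symmDiff (φ ⁻¹' B n) (B n)) + μ (D M) :=
          measure_union_le _ _
      _ ≤ (∑ i ∈ Finset.range (M + 1), μ (Z (u i) ∩ symmDiff (φ ⁻¹' B n) (B n))) + μ (D M) :=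
          add_le_add_left (measure_biUnion_finset_le _ _) _
      _ ≤ _ := add_le_add (Finset.sum_le_sum fun i _ => measure_mono (hpt (u i))) le_rfl
  calc μ (symmDiff (φ ⁻¹' B n) (B n)) ≤ _ := hbound
    _ ≤ ε / 2 + ε / 2 := add_le_add hn hM.le
    _ = ε := ENNReal.add_halves ε
end

section
/- If Γ ⊷ (Y, μ) is a strongly ergodic measure-preserving action of a countable group on a standard probability space and Z is a Borel subset of Y with μ(Z) > 0, then the restriction of the orbit equivalence relation R_{Γ⊷Y} to Z, with the normalized measure μ/μ(Z), is strongly ergodic. -/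
open MeasureTheory Filter Topology
open scoped ENNReal symmDiff

lemma aux_tendsto_tsum_zero {ι : Type*} [Countable ι] (c : ι → ℝ≥0∞) (hc : ∑' i, c i ≠ ⊤)
    (f : ℕ → ι → ℝ≥0∞) (hfc : ∀ n i, f n i ≤ c i)
    (hf : ∀ i, Tendsto (fun n => f n i) atTop (𝓝 0)) :
    Tendsto (fun n => ∑' i, f n i) atTop (𝓝 0) := by
  classical
  refine ENNReal.tendsto_atTop_zero.mpr ?_
  intro ε hε
  have hε2 : (0:ℝ≥0∞) < ε / 2 := ENNReal.half_pos hε.ne'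
  obtain ⟨s, hs⟩ : ∃ s : Finset ι, ∑' i : {i // i ∉ s}, c i < ε / 2 :=
    ((tendsto_order.1 (ENNReal.tendsto_tsum_compl_atTop_zero hc)).2 _ hε2).exists
  have hsum : Tendsto (fun n => ∑ i ∈ s, f n i) atTop (𝓝 0) := by
    have := tendsto_finset_sum s (fun i (_ : i ∈ s) => hf i)
    simpa using this
  obtain ⟨N, hN⟩ := (ENNReal.tendsto_atTop_zero.mp hsum) (ε/2) hε2
  refine ⟨N, fun n hn => ?_⟩
  have key : ∑' i, f n i ≤ ∑ i ∈ s, f n i + ∑' i : {i // i ∉ s}, c i := by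
    have h1 : ∑' i : {i // i ∉ s}, c i = ∑' i, Set.indicator {i | i ∉ s} c i :=
      tsum_subtype _ c
    calc ∑' i, f n i
        ≤ ∑' i, ((if i ∈ s then f n i else 0) + Set.indicator {i | i ∉ s} c i) := by
          refine ENNReal.tsum_le_tsum (fun i => ?_)
          by_cases h : i ∈ s
          · simp [h, Set.indicator]
          · simpa [h, Set.indicator] using hfc n i
      _ = ∑ i ∈ s, f n i + ∑' i, Set.indicator {i | i ∉ s} c i := by
          rw [ENNReal.tsum_add, tsum_eq_sum (s := s) (fun i hi => if_neg hi)]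
          congr 1
          exact Finset.sum_congr rfl (fun i hi => if_pos hi)
      _ = ∑ i ∈ s, f n i + ∑' i : {i // i ∉ s}, c i := by rw [← h1]
  calc ∑' i, f n i ≤ ∑ i ∈ s, f n i + ∑' i : {i // i ∉ s}, c i := key
    _ ≤ ε/2 + ε/2 := add_le_add (hN n hn) hs.le
    _ = ε := ENNReal.add_halves ε

lemma aux_involution {Γ Y : Type*} [Group Γ] [MeasurableSpace Y] [MulAction Γ Y]
    (hmeas : ∀ γ : Γ, Measurable fun y : Y => γ • y)
    (Z : Set Y) (δ : Γ) (P : Set Y) (hPmeas : MeasurableSet P)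
    (hPZ : P ⊆ Z) (hPδ : ∀ y ∈ P, δ • y ∈ Z)
    (hdisj : ∀ y ∈ P, δ • y ∉ P) :
    ∃ φ : Z ≃ᵐ Z, (∀ z : Z, ∃ γ : Γ, γ • (z : Y) = (φ z : Y)) ∧
      ∀ (Bs : Set Z) (y : Y), y ∈ P →
        Xor' (y ∈ Subtype.val '' Bs) (δ • y ∈ Subtype.val '' Bs) →
        y ∈ Subtype.val '' (symmDiff (⇑φ '' Bs) Bs) := by
  classical
  set Q : Set Y := (fun y => δ⁻¹ • y) ⁻¹' P with hQdef
  have hPQ : ∀ y ∈ P, y ∉ Q := by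
    intro y hy hyQ
    have h1 : δ⁻¹ • y ∈ P := hyQ
    have h2 : δ • (δ⁻¹ • y) ∉ P := hdisj _ h1
    rw [smul_inv_smul] at h2
    exact h2 hy
  set f0 : Y → Y := fun y => if y ∈ P then δ • y else if y ∈ Q then δ⁻¹ • y else y with hf0def
  have hf0P : ∀ y ∈ P, f0 y = δ • y := fun y hy => if_pos hy
  have hf0Q : ∀ y, y ∉ P → y ∈ Q → f0 y = δ⁻¹ • y := fun y hy hyQ => by
    simp only [hf0def, if_neg hy, if_pos hyQ]
  have hf0id : ∀ y, y ∉ P → y ∉ Q → f0 y = y := fun y hy hyQ => by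
    simp only [hf0def, if_neg hy, if_neg hyQ]
  have hinvol : ∀ y, f0 (f0 y) = y := by
    intro y
    by_cases hy : y ∈ P
    · rw [hf0P y hy]
      have h1 : δ • y ∉ P := hdisj y hy
      have h2 : δ • y ∈ Q := by
        show δ⁻¹ • δ • y ∈ P
        rwa [inv_smul_smul]
      rw [hf0Q _ h1 h2, inv_smul_smul]
    · by_cases hyQ : y ∈ Q
      · rw [hf0Q y hy hyQ]
        have h1 : δ⁻¹ • y ∈ P := hyQ
        rw [hf0P _ h1, smul_inv_smul]
      · rw [hf0id y hy hyQ, hf0id y hy hyQ]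
  have hmaps : ∀ y ∈ Z, f0 y ∈ Z := by
    intro y hy
    by_cases h1 : y ∈ P
    · rw [hf0P y h1]; exact hPδ y h1
    · by_cases h2 : y ∈ Q
      · rw [hf0Q y h1 h2]; exact hPZ h2
      · rwa [hf0id y h1 h2]
  have hQmeas : MeasurableSet Q := hPmeas.preimage (hmeas δ⁻¹)
  have hf0meas : Measurable f0 :=
    Measurable.ite hPmeas (hmeas δ) (Measurable.ite hQmeas (hmeas δ⁻¹) measurable_id)
  set f : Z → Z := fun z => ⟨f0 z, hmaps z z.2⟩ with hfdef
  have hfmeas : Measurable f :=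
    Measurable.subtype_mk (hf0meas.comp measurable_subtype_coe)
  have hfinv : ∀ z : Z, f (f z) = z := fun z => Subtype.ext (hinvol z)
  set φ : Z ≃ᵐ Z :=
    { toFun := f, invFun := f, left_inv := hfinv, right_inv := hfinv,
      measurable_toFun := hfmeas, measurable_invFun := hfmeas } with hφdef
  have hφcoe : ∀ z : Z, (φ z : Y) = f0 z := fun z => rfl
  refine ⟨φ, ?_, ?_⟩
  · intro z
    by_cases h1 : (z : Y) ∈ P
    · exact ⟨δ, by rw [hφcoe, hf0P _ h1]⟩
    · by_cases h2 : (z : Y) ∈ Q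
      · exact ⟨δ⁻¹, by rw [hφcoe, hf0Q _ h1 h2]⟩
      · exact ⟨1, by rw [hφcoe, hf0id _ h1 h2, one_smul]⟩
  · intro Bs y hy hxor
    have hyZ : y ∈ Z := hPZ hy
    have hδZ : δ • y ∈ Z := hPδ y hy
    set z : Z := ⟨y, hyZ⟩ with hzdef
    have hφz : (φ z : Y) = δ • y := by rw [hφcoe]; exact hf0P y hy
    have h1 : y ∈ Subtype.val '' Bs ↔ z ∈ Bs := by
      constructor
      · rintro ⟨w, hw, hwv⟩
        have : w = z := Subtype.ext hwv
        rwa [← this]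
      · intro h; exact ⟨z, h, rfl⟩
    have h2 : δ • y ∈ Subtype.val '' Bs ↔ φ z ∈ Bs := by
      constructor
      · rintro ⟨w, hw, hwv⟩
        have : w = φ z := Subtype.ext (by rw [hwv, hφz])
        rwa [← this]
      · intro h; exact ⟨φ z, h, hφz⟩
    have h3 : z ∈ ⇑φ '' Bs ↔ φ z ∈ Bs := by
      constructor
      · rintro ⟨w, hw, hwz⟩
        have : φ z = w := by rw [← hwz]; exact hfinv w
        rwa [this]
      · intro h; exact ⟨φ z, h, hfinv z⟩
    refine ⟨z, ?_, rfl⟩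
    rw [Set.mem_symmDiff]
    rcases hxor with ⟨ha, hb⟩ | ⟨hb, ha⟩
    · right
      exact ⟨h1.mp ha, fun hz => hb (h2.mpr (h3.mp hz))⟩
    · left
      exact ⟨h3.mpr (h2.mp hb), fun hz => ha (h1.mpr hz)⟩

/-- If `Γ ⊷ (Y, μ)` is a strongly ergodic measure-preserving action of a
countable group on a standard probability space and `Z` is a Borel subset of `Y` with
`μ Z > 0`, then the restriction of the orbit equivalence relation to `Z`, with the
normalized measure `μ / μ Z`, is strongly ergodic. -/
theorem strongly_ergodic_restriction
    {Γ Y : Type*} [Group Γ] [Countable Γ]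
    [MeasurableSpace Y] [StandardBorelSpace Y]
    (μ : Measure Y) [IsProbabilityMeasure μ] [MulAction Γ Y]
    (hmeas : ∀ γ : Γ, Measurable fun y : Y => γ • y)
    (hpres : ∀ γ : Γ, MeasurePreserving (fun y : Y => γ • y) μ μ)
    (hSE : ∀ B : ℕ → Set Y, (∀ n, MeasurableSet (B n)) →
      (∀ γ : Γ, Tendsto (fun n => μ (symmDiff ((γ • ·) '' B n) (B n))) atTop (𝓝 0)) →
      Tendsto (fun n => μ (B n) * (1 - μ (B n))) atTop (𝓝 0))
    (Z : Set Y) (hZmeas : MeasurableSet Z) (hZpos : 0 < μ Z) :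
    ∀ B : ℕ → Set Z, (∀ n, MeasurableSet (B n)) →
      (∀ φ : Z ≃ᵐ Z, (∀ z : Z, ∃ γ : Γ, γ • (z : Y) = (φ z : Y)) →
        Tendsto (fun n =>
          ((μ Z)⁻¹ • Measure.comap (Subtype.val : Z → Y) μ) (symmDiff (⇑φ '' B n) (B n)))
          atTop (𝓝 0)) →
      Tendsto (fun n =>
        ((μ Z)⁻¹ • Measure.comap (Subtype.val : Z → Y) μ) (B n) *
          (1 - ((μ Z)⁻¹ • Measure.comap (Subtype.val : Z → Y) μ) (B n))) atTop (𝓝 0) := by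
  classical
  intro B hB hinv
  have hZne : μ Z ≠ 0 := hZpos.ne'
  have hZfin : μ Z ≠ ⊤ := (measure_lt_top μ Z).ne
  have hZinvfin : (μ Z)⁻¹ ≠ ⊤ := ENNReal.inv_ne_top.mpr hZne
  set ν : Measure Z := (μ Z)⁻¹ • Measure.comap (Subtype.val : Z → Y) μ with hνdef
  have hemb : MeasurableEmbedding (Subtype.val : Z → Y) :=
    MeasurableEmbedding.subtype_coe hZmeas
  have hνapp : ∀ s : Set Z, ν s = (μ Z)⁻¹ * μ (Subtype.val '' s) := by
    intro s
    rw [hνdef, Measure.smul_apply, smul_eq_mul, hemb.comap_apply]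
  set B' : ℕ → Set Y := fun n => Subtype.val '' (B n) with hB'def
  have hB'meas : ∀ n, MeasurableSet (B' n) := fun n => hemb.measurableSet_image' (hB n)
  have hB'Z : ∀ n, B' n ⊆ Z := by
    intro n y hy
    obtain ⟨w, _, rfl⟩ := hy
    exact w.2
  -- translated invariance hypothesis
  have hinv' : ∀ φ : Z ≃ᵐ Z, (∀ z : Z, ∃ γ : Γ, γ • (z : Y) = (φ z : Y)) →
      Tendsto (fun n => μ (Subtype.val '' (symmDiff (⇑φ '' B n) (B n)))) atTop (𝓝 0) := by
    intro φ hφ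
    have h := hinv φ hφ
    have h2 : Tendsto (fun n => μ Z *
        (((μ Z)⁻¹ • Measure.comap (Subtype.val : Z → Y) μ) (symmDiff (⇑φ '' B n) (B n))))
        atTop (𝓝 (μ Z * 0)) := ENNReal.Tendsto.const_mul h (Or.inr hZfin)
    rw [mul_zero] at h2
    refine h2.congr (fun n => ?_)
    rw [Measure.smul_apply, smul_eq_mul, hemb.comap_apply, ← mul_assoc,
      ENNReal.mul_inv_cancel hZne hZfin, one_mul]
  -- image vs preimage under the action
  have himg : ∀ (γ : Γ) (s : Set Y), (γ • ·) '' s = (fun y => γ⁻¹ • y) ⁻¹' s := by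
    intro γ s
    ext y
    constructor
    · rintro ⟨x, hx, rfl⟩
      simpa [inv_smul_smul] using hx
    · intro h
      exact ⟨γ⁻¹ • y, h, smul_inv_smul γ y⟩
  have himgμ : ∀ (γ : Γ) (s : Set Y), MeasurableSet s → μ ((γ • ·) '' s) = μ s := by
    intro γ s hs
    rw [himg]
    exact (hpres γ⁻¹).measure_preimage hs.nullMeasurableSet
  -- enumeration of the group with e 0 = 1
  obtain ⟨e0, he0⟩ := exists_surjective_nat Γ
  set e : ℕ → Γ := fun k => Nat.casesOn k 1 e0 with hedef
  have he1 : e 0 = 1 := rfl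
  have hesurj : ∀ γ : Γ, ∃ k, e k = γ := by
    intro γ
    obtain ⟨m, hm⟩ := he0 γ
    exact ⟨m + 1, hm⟩
  -- the sets D k and W
  set D : ℕ → Set Y := fun k =>
    ((fun y => e k • y) ⁻¹' Z) ∩ ⋂ j ∈ Finset.range k, ((fun y => e j • y) ⁻¹' Z)ᶜ with hDdef
  have hDmeas : ∀ k, MeasurableSet (D k) := by
    intro k
    exact (hZmeas.preimage (hmeas _)).inter
      (MeasurableSet.biInter (Set.to_countable _)
        (fun j _ => (hZmeas.preimage (hmeas _)).compl))
  have hDmem : ∀ k y, y ∈ D k ↔ (e k • y ∈ Z ∧ ∀ j < k, e j • y ∉ Z) := by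
    intro k y
    simp [hDdef, Finset.mem_range]
  have hDunique : ∀ y j k, y ∈ D j → y ∈ D k → j = k := by
    intro y j k hj hk
    by_contra hne
    rcases lt_or_gt_of_ne hne with h | h
    · exact ((hDmem k y).1 hk).2 j h ((hDmem j y).1 hj).1
    · exact ((hDmem j y).1 hj).2 k h ((hDmem k y).1 hk).1
  set W : Set Y := ⋃ k, D k with hWdef
  have hWmeas : MeasurableSet W := MeasurableSet.iUnion hDmeas
  have hWmem : ∀ y, y ∈ W ↔ ∃ γ : Γ, γ • y ∈ Z := by
    intro y
    constructor
    · intro hy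
      obtain ⟨k, hk⟩ := Set.mem_iUnion.1 hy
      exact ⟨e k, ((hDmem k y).1 hk).1⟩
    · rintro ⟨γ, hγ⟩
      obtain ⟨k, rfl⟩ := hesurj γ
      have hex : ∃ m, e m • y ∈ Z := ⟨k, hγ⟩
      refine Set.mem_iUnion.2 ⟨Nat.find hex, (hDmem _ y).2 ⟨Nat.find_spec hex, ?_⟩⟩
      exact fun j hj => Nat.find_min hex hj
  have hWpre : ∀ γ : Γ, (fun y => γ • y) ⁻¹' W = W := by
    intro γ
    ext y
    rw [Set.mem_preimage, hWmem, hWmem]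
    constructor
    · rintro ⟨β, hβ⟩
      exact ⟨β * γ, by rwa [mul_smul]⟩
    · rintro ⟨β, hβ⟩
      refine ⟨β * γ⁻¹, ?_⟩
      rwa [mul_smul, inv_smul_smul]
  have hWimg : ∀ γ : Γ, (γ • ·) '' W = W := by
    intro γ
    rw [himg]
    exact hWpre γ⁻¹
  have hZW : Z ⊆ W := fun y hy => (hWmem y).2 ⟨1, by rwa [one_smul]⟩
  have hW1 : μ W = 1 := by
    have h0 : Tendsto (fun _ : ℕ => μ W * (1 - μ W)) atTop (𝓝 0) := by
      refine hSE (fun _ => W) (fun _ => hWmeas) (fun γ => ?_)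
      have : ∀ n : ℕ, μ (symmDiff ((γ • ·) '' W) W) = 0 := by
        intro n
        rw [hWimg γ, symmDiff_self]
        simp
      simpa [this 0] using tendsto_const_nhds (α := ℝ≥0∞) (f := atTop (α := ℕ))
    have h1 : μ W * (1 - μ W) = 0 := tendsto_nhds_unique tendsto_const_nhds h0
    rcases mul_eq_zero.1 h1 with h | h
    · exact absurd h (by simpa using (hZpos.trans_le (measure_mono hZW)).ne')
    · exact le_antisymm prob_le_one (tsub_eq_zero_iff_le.1 h)
  -- the induced sets A n
  set A : ℕ → Set Y := fun n => ⋃ k, D k ∩ ((fun y => e k • y) ⁻¹' (B' n)) with hAdef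
  have hAmeas : ∀ n, MeasurableSet (A n) := by
    intro n
    exact MeasurableSet.iUnion fun k => (hDmeas k).inter ((hB'meas n).preimage (hmeas _))
  have hAmem : ∀ n y, y ∈ A n ↔ ∃ k, y ∈ D k ∧ e k • y ∈ B' n := by
    intro n y
    simp [hAdef]
  have hAW : ∀ n, A n ⊆ W := by
    intro n y hy
    obtain ⟨k, hk, _⟩ := (hAmem n y).1 hy
    exact Set.mem_iUnion.2 ⟨k, hk⟩
  have hD0 : ∀ y ∈ Z, y ∈ D 0 := by
    intro y hy
    refine (hDmem 0 y).2 ⟨by rwa [he1, one_smul], fun j hj => absurd hj (Nat.not_lt_zero j)⟩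
  have hAZ : ∀ n, A n ∩ Z = B' n := by
    intro n
    ext y
    constructor
    · rintro ⟨hyA, hyZ⟩
      obtain ⟨k, hk, hkB⟩ := (hAmem n y).1 hyA
      have hk0 : k = 0 := hDunique y k 0 hk (hD0 y hyZ)
      rw [hk0, he1, one_smul] at hkB
      exact hkB
    · intro hy
      have hyZ : y ∈ Z := hB'Z n hy
      exact ⟨(hAmem n y).2 ⟨0, hD0 y hyZ, by rwa [he1, one_smul]⟩, hyZ⟩
  -- the "bad" sets
  set Bad : ℕ → Γ → Set Y := fun n δ => (Z ∩ ((fun y => δ • y) ⁻¹' Z)) ∩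
      ((B' n ∩ ((fun y => δ • y) ⁻¹' (B' n)ᶜ)) ∪ ((B' n)ᶜ ∩ ((fun y => δ • y) ⁻¹' (B' n))))
      with hBaddef
  have hBadmeas : ∀ n δ, MeasurableSet (Bad n δ) := by
    intro n δ
    exact ((hZmeas.inter (hZmeas.preimage (hmeas δ))).inter
      (((hB'meas n).inter (((hB'meas n).compl).preimage (hmeas δ))).union
        (((hB'meas n).compl).inter ((hB'meas n).preimage (hmeas δ)))))
  have hBadmem : ∀ n δ y, y ∈ Bad n δ ↔
      (y ∈ Z ∧ δ • y ∈ Z) ∧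
        ((y ∈ B' n ∧ δ • y ∉ B' n) ∨ (y ∉ B' n ∧ δ • y ∈ B' n)) := by
    intro n δ y
    simp [hBaddef]
  -- separating family
  obtain ⟨S, hSmeas, hSsep⟩ :=
    exists_seq_separating Y MeasurableSet.empty Set.univ
  -- the sets P δ k
  set P : Γ → ℕ → Set Y := fun δ k =>
    ((Z ∩ ((fun y => δ • y) ⁻¹' Z)) ∩ S k) ∩ ((fun y => δ • y) ⁻¹' (S k)ᶜ) with hPdef
  have hPmeas : ∀ δ k, MeasurableSet (P δ k) := by
    intro δ k
    exact (((hZmeas.inter (hZmeas.preimage (hmeas δ))).inter (hSmeas k)).inter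
      (((hSmeas k).compl).preimage (hmeas δ)))
  have hPmem : ∀ δ k y, y ∈ P δ k ↔
      ((y ∈ Z ∧ δ • y ∈ Z) ∧ y ∈ S k) ∧ δ • y ∉ S k := by
    intro δ k y
    simp [hPdef]
  -- Claim A : the P-part of the bad set is asymptotically null
  have claimA : ∀ (δ : Γ) (k : ℕ),
      Tendsto (fun n => μ (P δ k ∩ Bad n δ)) atTop (𝓝 0) := by
    intro δ k
    have hPZ' : P δ k ⊆ Z := fun y hy => ((hPmem δ k y).1 hy).1.1.1
    have hPδ' : ∀ y ∈ P δ k, δ • y ∈ Z := fun y hy => ((hPmem δ k y).1 hy).1.1.2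
    have hdisj : ∀ y ∈ P δ k, δ • y ∉ P δ k := by
      intro y hy hcon
      exact ((hPmem δ k y).1 hy).2 (((hPmem δ k (δ • y)).1 hcon).1.2)
    obtain ⟨φ, hφfull, hφkey⟩ :=
      aux_involution hmeas Z δ (P δ k) (hPmeas δ k) hPZ' hPδ' hdisj
    have h := hinv' φ hφfull
    refine tendsto_of_tendsto_of_tendsto_of_le_of_le tendsto_const_nhds h
      (fun n => zero_le) (fun n => ?_)
    refine measure_mono ?_
    rintro y ⟨hyP, hyBad⟩
    have hx := ((hBadmem n δ y).1 hyBad).2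
    refine hφkey (B n) y hyP ?_
    rcases hx with ⟨h1, h2⟩ | ⟨h1, h2⟩
    · exact Or.inl ⟨h1, h2⟩
    · exact Or.inr ⟨h2, h1⟩
  -- Key : the bad sets are asymptotically null
  have hKEY : ∀ δ : Γ, Tendsto (fun n => μ (Bad n δ)) atTop (𝓝 0) := by
    intro δ
    set Qs : ℕ → Set Y := fun k =>
      ((Z ∩ ((fun y => δ • y) ⁻¹' Z)) ∩ (S k)ᶜ) ∩ ((fun y => δ • y) ⁻¹' (S k)) with hQsdef
    have hQsmeas : ∀ k, MeasurableSet (Qs k) := by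
      intro k
      exact (((hZmeas.inter (hZmeas.preimage (hmeas δ))).inter ((hSmeas k).compl)).inter
        ((hSmeas k).preimage (hmeas δ)))
    have hQsmem : ∀ k y, y ∈ Qs k ↔
        ((y ∈ Z ∧ δ • y ∈ Z) ∧ y ∉ S k) ∧ δ • y ∈ S k := by
      intro k y
      simp [hQsdef]
    -- the Q-part also tends to zero, by applying claim A to δ⁻¹
    have hQclaim : ∀ k, Tendsto (fun n => μ (Qs k ∩ Bad n δ)) atTop (𝓝 0) := by
      intro k
      refine tendsto_of_tendsto_of_tendsto_of_le_of_le tendsto_const_nhds (claimA δ⁻¹ k)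
        (fun n => zero_le) (fun n => ?_)
      have heq : μ (Qs k ∩ Bad n δ) = μ ((δ • ·) '' (Qs k ∩ Bad n δ)) :=
        (himgμ δ _ ((hQsmeas k).inter (hBadmeas n δ))).symm
      rw [heq]
      refine measure_mono ?_
      rintro w ⟨y, ⟨hyQ, hyBad⟩, rfl⟩
      obtain ⟨⟨⟨hyZ, hδZ⟩, hyS⟩, hδS⟩ := (hQsmem k y).1 hyQ
      obtain ⟨-, hxor⟩ := (hBadmem n δ y).1 hyBad
      have hy' : δ⁻¹ • (δ • y) = y := inv_smul_smul δ y
      constructor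
      · refine (hPmem δ⁻¹ k (δ • y)).2 ⟨⟨⟨hδZ, ?_⟩, hδS⟩, ?_⟩
        · rwa [hy']
        · rwa [hy']
      · refine (hBadmem n δ⁻¹ (δ • y)).2 ⟨⟨hδZ, by rwa [hy']⟩, ?_⟩
        rcases hxor with ⟨h1, h2⟩ | ⟨h1, h2⟩
        · exact Or.inr ⟨h2, by rwa [hy']⟩
        · exact Or.inl ⟨h2, by rwa [hy']⟩
    -- disjointified cover
    set V : ℕ → Set Y := fun k => P δ k ∪ Qs k with hVdef
    have hVmeas : ∀ k, MeasurableSet (V k) := fun k => (hPmeas δ k).union (hQsmeas k)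
    set R : ℕ → Set Y := fun k => V k \ ⋃ j ∈ Finset.range k, V j with hRdef
    have hRmeas : ∀ k, MeasurableSet (R k) := by
      intro k
      exact (hVmeas k).diff
        (MeasurableSet.biUnion (Set.to_countable _) (fun j _ => hVmeas j))
    have hRV : ∀ k, R k ⊆ V k := fun k => Set.diff_subset
    have hRdisj : Pairwise (Function.onFun Disjoint R) := by
      intro j k hjk
      wlog h : j < k generalizing j k
      · exact (this hjk.symm (hjk.lt_or_gt.resolve_left h)).symm
      refine Set.disjoint_left.2 fun y hyj hyk => ?_
      have : y ∈ ⋃ i ∈ Finset.range k, V i :=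
        Set.mem_biUnion (Finset.mem_range.2 h) (hRV j hyj)
      exact hyk.2 this
    have hRsum : ∑' k, μ (R k) ≠ ⊤ := by
      rw [← measure_iUnion hRdisj hRmeas]
      exact (measure_lt_top μ _).ne
    have hcoverV : ∀ n, Bad n δ ⊆ ⋃ k, V k := by
      intro n y hy
      obtain ⟨⟨hyZ, hδZ⟩, hxor⟩ := (hBadmem n δ y).1 hy
      have hne : δ • y ≠ y := by
        intro hcon
        rcases hxor with ⟨h1, h2⟩ | ⟨h1, h2⟩
        · rw [hcon] at h2; exact h2 h1
        · rw [hcon] at h2; exact h1 h2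
      have hsep : ∃ k, ¬ (δ • y ∈ S k ↔ y ∈ S k) := by
        by_contra hcon
        push_neg at hcon
        exact hne (hSsep (δ • y) (Set.mem_univ _) y (Set.mem_univ _) hcon)
      obtain ⟨k, hk⟩ := hsep
      rcases Classical.em (y ∈ S k) with hyS | hyS
      · refine Set.mem_iUnion.2 ⟨k, Or.inl ((hPmem δ k y).2 ⟨⟨⟨hyZ, hδZ⟩, hyS⟩, ?_⟩)⟩
        intro hδS
        exact hk (iff_of_true hδS hyS)
      · refine Set.mem_iUnion.2 ⟨k, Or.inr ((hQsmem k y).2 ⟨⟨⟨hyZ, hδZ⟩, hyS⟩, ?_⟩)⟩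
        by_contra hδS
        exact hk (iff_of_false hδS hyS)
    have hcoverR : ∀ n, Bad n δ ⊆ ⋃ k, R k ∩ Bad n δ := by
      intro n y hy
      have hyV : y ∈ ⋃ k, V k := hcoverV n hy
      have hex : ∃ k, y ∈ V k := Set.mem_iUnion.1 hyV
      refine Set.mem_iUnion.2 ⟨Nat.find hex, ⟨⟨Nat.find_spec hex, ?_⟩, hy⟩⟩
      intro hcon
      obtain ⟨j, hj2⟩ := Set.mem_iUnion.1 hcon
      obtain ⟨hj3, hj4⟩ := Set.mem_iUnion.1 hj2
      exact Nat.find_min hex (Finset.mem_range.1 hj3) hj4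
    have hRclaim : ∀ k, Tendsto (fun n => μ (R k ∩ Bad n δ)) atTop (𝓝 0) := by
      intro k
      have hub : Tendsto (fun n => μ (P δ k ∩ Bad n δ) + μ (Qs k ∩ Bad n δ)) atTop (𝓝 0) := by
        have := Tendsto.add (claimA δ k) (hQclaim k)
        simpa using this
      refine tendsto_of_tendsto_of_tendsto_of_le_of_le tendsto_const_nhds hub
        (fun n => zero_le) (fun n => ?_)
      have hsub : R k ∩ Bad n δ ⊆ (P δ k ∩ Bad n δ) ∪ (Qs k ∩ Bad n δ) := by
        rintro y ⟨hyR, hyB⟩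
        rcases hRV k hyR with h | h
        · exact Or.inl ⟨h, hyB⟩
        · exact Or.inr ⟨h, hyB⟩
      exact (measure_mono hsub).trans (measure_union_le _ _)
    have hts : Tendsto (fun n => ∑' k, μ (R k ∩ Bad n δ)) atTop (𝓝 0) :=
      aux_tendsto_tsum_zero (fun k => μ (R k)) hRsum _
        (fun n k => measure_mono Set.inter_subset_left) hRclaim
    refine tendsto_of_tendsto_of_tendsto_of_le_of_le tendsto_const_nhds hts
      (fun n => zero_le) (fun n => ?_)
    exact (measure_mono (hcoverR n)).trans (measure_iUnion_le _)
  -- asymptotic invariance of A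
  have hAinv : ∀ γ : Γ,
      Tendsto (fun n => μ (symmDiff ((γ • ·) '' A n) (A n))) atTop (𝓝 0) := by
    intro γ
    set sd : ℕ → Set Y := fun n => symmDiff ((γ • ·) '' A n) (A n) with hsddef
    have hsdmeas : ∀ n, MeasurableSet (sd n) := by
      intro n
      have h1 : MeasurableSet ((γ • ·) '' A n) := by
        rw [himg]
        exact (hAmeas n).preimage (hmeas γ⁻¹)
      exact h1.symmDiff (hAmeas n)
    have hsdmem : ∀ n y, y ∈ sd n ↔
        ((γ⁻¹ • y ∈ A n ∧ y ∉ A n) ∨ (y ∈ A n ∧ γ⁻¹ • y ∉ A n)) := by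
      intro n y
      rw [hsddef]
      simp only [Set.mem_symmDiff, himg γ (A n), Set.mem_preimage]
    set C : ℕ × ℕ → Set Y := fun p => D p.1 ∩ ((fun y => γ⁻¹ • y) ⁻¹' (D p.2)) with hCdef
    have hCmeas : ∀ p, MeasurableSet (C p) := fun p =>
      (hDmeas p.1).inter ((hDmeas p.2).preimage (hmeas γ⁻¹))
    have hCdisj : Pairwise (Function.onFun Disjoint C) := by
      rintro ⟨a, b⟩ ⟨a', b'⟩ hne
      refine Set.disjoint_left.2 fun y hy hy' => ?_
      refine hne ?_
      obtain ⟨h1, h2⟩ := hy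
      obtain ⟨h1', h2'⟩ := hy'
      have ha : a = a' := hDunique y a a' h1 h1'
      have hb : b = b' := hDunique (γ⁻¹ • y) b b' h2 h2'
      rw [ha, hb]
    have hCsum : ∑' p, μ (C p) ≠ ⊤ := by
      rw [← measure_iUnion hCdisj hCmeas]
      exact (measure_lt_top μ _).ne
    have hcover : ∀ n, sd n ⊆ ⋃ p, C p ∩ sd n := by
      intro n y hy
      have hyW : y ∈ W := by
        rcases (hsdmem n y).1 hy with ⟨h1, _⟩ | ⟨h1, _⟩
        · have : γ⁻¹ • y ∈ W := hAW n h1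
          rw [← hWpre γ⁻¹]
          exact this
        · exact hAW n h1
      have hyW2 : γ⁻¹ • y ∈ W := by
        rw [← hWpre γ⁻¹] at hyW
        exact hyW
      obtain ⟨a, ha⟩ := Set.mem_iUnion.1 hyW
      obtain ⟨b, hb⟩ := Set.mem_iUnion.1 hyW2
      exact Set.mem_iUnion.2 ⟨⟨a, b⟩, ⟨⟨ha, hb⟩, hy⟩⟩
    have hterm : ∀ p : ℕ × ℕ, Tendsto (fun n => μ (C p ∩ sd n)) atTop (𝓝 0) := by
      rintro ⟨a, b⟩
      set δ : Γ := e b * γ⁻¹ * (e a)⁻¹ with hδdef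
      refine tendsto_of_tendsto_of_tendsto_of_le_of_le tendsto_const_nhds (hKEY δ)
        (fun n => zero_le) (fun n => ?_)
      have heq : μ (C (a, b) ∩ sd n) = μ ((fun y => e a • y) '' (C (a, b) ∩ sd n)) :=
        (himgμ (e a) _ ((hCmeas (a, b)).inter (hsdmeas n))).symm
      rw [heq]
      refine measure_mono ?_
      rintro w ⟨y, ⟨⟨hya, hyb⟩, hysd⟩, rfl⟩
      have hδz : δ • (e a • y) = e b • (γ⁻¹ • y) := by
        rw [hδdef, mul_smul, mul_smul, inv_smul_smul]
      have hyAiff : y ∈ A n ↔ e a • y ∈ B' n := by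
        constructor
        · intro h
          obtain ⟨k, hk, hkB⟩ := (hAmem n y).1 h
          rwa [hDunique y k a hk hya] at hkB
        · intro h
          exact (hAmem n y).2 ⟨a, hya, h⟩
      have hyAiff2 : γ⁻¹ • y ∈ A n ↔ e b • (γ⁻¹ • y) ∈ B' n := by
        constructor
        · intro h
          obtain ⟨k, hk, hkB⟩ := (hAmem n (γ⁻¹ • y)).1 h
          rwa [hDunique (γ⁻¹ • y) k b hk hyb] at hkB
        · intro h
          exact (hAmem n (γ⁻¹ • y)).2 ⟨b, hyb, h⟩
      refine (hBadmem n δ (e a • y)).2 ⟨⟨((hDmem a y).1 hya).1, ?_⟩, ?_⟩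
      · rw [hδz]
        exact ((hDmem b (γ⁻¹ • y)).1 hyb).1
      · rcases (hsdmem n y).1 hysd with ⟨h1, h2⟩ | ⟨h1, h2⟩
        · refine Or.inr ⟨fun hc => h2 (hyAiff.2 hc), ?_⟩
          rw [hδz]
          exact hyAiff2.1 h1
        · refine Or.inl ⟨hyAiff.1 h1, ?_⟩
          rw [hδz]
          exact fun hc => h2 (hyAiff2.2 hc)
    have hts : Tendsto (fun n => ∑' p, μ (C p ∩ sd n)) atTop (𝓝 0) :=
      aux_tendsto_tsum_zero (fun p => μ (C p)) hCsum _
        (fun n p => measure_mono Set.inter_subset_left) hterm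
    refine tendsto_of_tendsto_of_tendsto_of_le_of_le tendsto_const_nhds hts
      (fun n => zero_le) (fun n => ?_)
    exact (measure_mono (hcover n)).trans (measure_iUnion_le _)
  -- apply strong ergodicity on Y
  have hmain := hSE A hAmeas hAinv
  -- conclusion
  have hub : Tendsto (fun n => (μ Z)⁻¹ * ((μ Z)⁻¹ * (μ (A n) * (1 - μ (A n)))))
      atTop (𝓝 0) := by
    have h1 := ENNReal.Tendsto.const_mul hmain (Or.inr hZinvfin)
    rw [mul_zero] at h1
    have h2 := ENNReal.Tendsto.const_mul h1 (Or.inr hZinvfin)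
    rw [mul_zero] at h2
    exact h2
  refine tendsto_of_tendsto_of_tendsto_of_le_of_le tendsto_const_nhds hub
    (fun n => zero_le) (fun n => ?_)
  show ν (B n) * (1 - ν (B n)) ≤ _
  have hb : μ (B' n) ≤ μ (A n) := by
    rw [← hAZ n]
    exact measure_mono Set.inter_subset_left
  have hbZ : μ (B' n) ≤ μ Z := measure_mono (hB'Z n)
  have hν1 : ν (B n) = (μ Z)⁻¹ * μ (B' n) := hνapp (B n)
  have hν2 : 1 - ν (B n) ≤ (μ Z)⁻¹ * (μ Z - μ (B' n)) := by
    rw [hν1]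
    refine tsub_le_iff_right.2 ?_
    rw [← mul_add, tsub_add_cancel_of_le hbZ, ENNReal.inv_mul_cancel hZne hZfin]
  have hZb : μ Z - μ (B' n) ≤ 1 - μ (A n) := by
    refine tsub_le_iff_right.2 ?_
    have h1 : μ (Z ∩ A n) = μ (B' n) := by
      rw [Set.inter_comm, hAZ n]
    have h2 : μ (Z \ A n) ≤ 1 - μ (A n) := by
      have h3 : μ (Set.univ \ A n) = 1 - μ (A n) := by
        rw [measure_diff (Set.subset_univ _) (hAmeas n).nullMeasurableSet
          (measure_lt_top μ _).ne, measure_univ]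
      rw [← h3]
      exact measure_mono (Set.diff_subset_diff_left (Set.subset_univ Z))
    calc μ Z ≤ μ (Z ∩ A n) + μ (Z \ A n) := measure_le_inter_add_diff μ Z (A n)
      _ ≤ μ (B' n) + (1 - μ (A n)) := by rw [h1]; exact add_le_add le_rfl h2
      _ = (1 - μ (A n)) + μ (B' n) := add_comm _ _
  calc ν (B n) * (1 - ν (B n))
      ≤ ((μ Z)⁻¹ * μ (B' n)) * ((μ Z)⁻¹ * (μ Z - μ (B' n))) := by
        rw [← hν1]
        exact mul_le_mul_right hν2 _
    _ ≤ ((μ Z)⁻¹ * μ (A n)) * ((μ Z)⁻¹ * (1 - μ (A n))) := by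
        exact mul_le_mul' (mul_le_mul_right hb _) (mul_le_mul_right hZb _)
    _ = (μ Z)⁻¹ * ((μ Z)⁻¹ * (μ (A n) * (1 - μ (A n)))) := by ring
end

section
/- Every end of an infinite, locally finite, connected countable graph is realized by an infinite injective path: for every end ξ there is an injective path c : ℕ → V such that for every finite K ⊆ V, the path c eventually lies in ξ(K). -/
lemma head_ne_of_suffix {α : Type*} {l r1 r2 : List α} {a b : α} (hnd : l.Nodup)
    (h1 : r1 <:+ l) (h2 : r2 <:+ l) (hlt : r1.length < r2.length)
    (ha : r1.head? = some a) (hb : r2.head? = some b) : a ≠ b := by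
  have h12 : r1 <:+ r2 := by
    rw [← List.reverse_prefix] at h1 h2 ⊢
    exact List.prefix_of_prefix_length_le h1 h2 (by simpa using hlt.le)
  obtain ⟨t2, rfl⟩ : ∃ t2, r2 = b :: t2 := by
    cases r2 with
    | nil => simp at hb
    | cons x t => exact ⟨t, by simpa using (by simpa using hb : x = b) ▸ rfl⟩
  obtain ⟨t1, rfl⟩ : ∃ t1, r1 = a :: t1 := by
    cases r1 with
    | nil => simp at ha
    | cons x t => exact ⟨t, by simp_all⟩
  have hnd2 : (b :: t2).Nodup := hnd.sublist h2.sublist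
  rcases List.suffix_cons_iff.mp h12 with h | h
  · exfalso; rw [h] at hlt; simp at hlt
  · intro hab
    have : a ∈ t2 := h.sublist.mem (by simp)
    rw [hab] at this
    exact (List.nodup_cons.mp hnd2).1 this

lemma walk_firstHit {V : Type*} {G : SimpleGraph V} (S : Set V) :
    ∀ {u w : V} (p : G.Walk u w), w ∈ S → p.IsPath →
    ∃ (x : V) (q : G.Walk u x), x ∈ S ∧ (∀ y ∈ q.support, y ∈ S → y = x) ∧
      q.support ⊆ p.support ∧ q.IsPath := by
  intro u w p
  induction p with
  | nil =>
    intro hw _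
    exact ⟨_, .nil, hw, by simp, by simp, by simp⟩
  | @cons u v w h p ih =>
    intro hw hp
    by_cases hu : u ∈ S
    · exact ⟨u, .nil, hu, by simp, by simp, by simp⟩
    · obtain ⟨x, q, hx, hfirst, hsub, hq⟩ := ih hw ((SimpleGraph.Walk.cons_isPath_iff _ _).mp hp).1
      have hu' : u ∉ p.support := ((SimpleGraph.Walk.cons_isPath_iff _ _).mp hp).2
      refine ⟨x, .cons h q, hx, ?_, ?_, ?_⟩
      · intro y hy hyS
        simp only [SimpleGraph.Walk.support_cons, List.mem_cons] at hy
        rcases hy with hy | hy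
        · exact absurd (hy ▸ hyS) hu
        · exact hfirst y hy hyS
      · intro y hy
        simp only [SimpleGraph.Walk.support_cons, List.mem_cons] at hy ⊢
        rcases hy with hy | hy
        · simp [hy]
        · exact Or.inr (hsub hy)
      · exact (SimpleGraph.Walk.cons_isPath_iff _ _).mpr ⟨hq, fun hc => hu' (hsub hc)⟩

lemma walk_support_closed {V : Type*} {G : SimpleGraph V} {S : Set V}
    (hcl : ∀ a b, a ∈ S → G.Adj a b → b ∈ S) :
    ∀ {u w : V} (p : G.Walk u w), u ∈ S → ∀ y ∈ p.support, y ∈ S := by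
  intro u w p
  induction p with
  | nil => intro hu y hy; simp at hy; rwa [hy]
  | @cons u v w h p ih =>
    intro hu y hy
    simp only [SimpleGraph.Walk.support_cons, List.mem_cons] at hy
    rcases hy with hy | hy
    · rwa [hy]
    · exact ih (hcl _ _ hu h) y hy

def avoidGraph {V : Type*} (G : SimpleGraph V) (K : Finset V) : SimpleGraph V where
  Adj a b := G.Adj a b ∧ a ∉ (K : Set V) ∧ b ∉ (K : Set V)
  symm := ⟨fun a b h => ⟨h.1.symm, h.2.2, h.2.1⟩⟩
  loopless := ⟨fun a h => G.loopless.irrefl a h.1⟩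

section
variable {V : Type*} (G : SimpleGraph V) (ξ : Finset V → Set V)

lemma xi_disjoint
    (hcomp : ∀ K : Finset V, ∃ v : V, v ∉ K ∧
      ξ K = {u | Relation.ReflTransGen
        (fun a b => G.Adj a b ∧ a ∉ (K : Set V) ∧ b ∉ (K : Set V)) v u})
    (K : Finset V) {x : V} (hx : x ∈ ξ K) : x ∉ (K : Set V) := by
  obtain ⟨v, hv, hξ⟩ := hcomp K
  rw [hξ] at hx
  induction hx with
  | refl => simpa using hv
  | tail _ h2 _ => exact h2.2.2

lemma seg_exists
    (hcomp : ∀ K : Finset V, ∃ v : V, v ∉ K ∧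
      ξ K = {u | Relation.ReflTransGen
        (fun a b => G.Adj a b ∧ a ∉ (K : Set V) ∧ b ∉ (K : Set V)) v u})
    (hinf : ∀ K : Finset V, (ξ K).Infinite)
    (hmono : ∀ K K' : Finset V, K ⊆ K' → ξ K' ⊆ ξ K)
    (K K' : Finset V) (hKK' : K ⊆ K') (u : V) (hu : u ∈ ξ K) (huK' : u ∈ K') :
    ∃ (l : List V) (w : V), l ≠ [] ∧ l.head? = some u ∧
      List.Chain' G.Adj (l ++ [w]) ∧ l.Nodup ∧
      (∀ x ∈ l, x ∈ ξ K ∧ x ∉ ξ K') ∧ w ∈ ξ K' := by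
  classical
  obtain ⟨v, hv, hξ⟩ := hcomp K
  set G' := avoidGraph G K with hG'
  have hadj : ∀ a b, G'.Adj a b ↔ (G.Adj a b ∧ a ∉ (K : Set V) ∧ b ∉ (K : Set V)) :=
    fun a b => Iff.rfl
  -- closure of ξ K under G'
  have hcl : ∀ a b, a ∈ ξ K → G'.Adj a b → b ∈ ξ K := by
    intro a b ha hab
    rw [hξ] at ha ⊢
    exact ha.tail hab
  obtain ⟨w₀, hw₀⟩ := (hinf K').nonempty
  have hw₀K : w₀ ∈ ξ K := hmono K K' hKK' hw₀
  have hrtg : Relation.ReflTransGen G'.Adj u w₀ := by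
    have h1 : Relation.ReflTransGen G'.Adj v u := by rw [hξ] at hu; exact hu
    have h2 : Relation.ReflTransGen G'.Adj v w₀ := by rw [hξ] at hw₀K; exact hw₀K
    exact Relation.ReflTransGen.trans
      (haveI := G'.symm; (Relation.ReflTransGen.symmetric (r := G'.Adj)).symm _ _ h1) h2
  have hreach : G'.Reachable u w₀ := (SimpleGraph.reachable_iff_reflTransGen u w₀).mpr hrtg
  obtain ⟨p0⟩ := hreach
  obtain ⟨x, q, hx, hfirst, hsub, hq⟩ :=
    walk_firstHit (ξ K') p0.bypass (by simpa using hw₀) p0.bypass_isPath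
  have husup : u ∈ ξ K := hu
  have hsupclosed : ∀ y ∈ q.support, y ∈ ξ K := walk_support_closed hcl q hu
  -- last of support is x
  have hlast? : q.support.getLast? = some x := by
    rw [← List.head?_reverse, ← SimpleGraph.Walk.support_reverse]
    rw [q.reverse.support_eq_cons]
    rfl
  have hne : q.support ≠ [] := q.support_ne_nil
  have hlast : q.support.getLast hne = x := by
    rwa [List.getLast?_eq_getLast hne, Option.some_inj] at hlast?
  obtain ⟨l, hsupp⟩ : ∃ l, l ++ [x] = q.support := by
    refine ⟨q.support.dropLast, ?_⟩
    have h := List.dropLast_append_getLast hne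
    rw [hlast] at h
    exact h
  -- u ≠ x
  have hux : u ≠ x := by
    intro h
    exact xi_disjoint G ξ hcomp K' (h ▸ hx) (by simpa using huK')
  have hcons : q.support = u :: q.support.tail := q.support_eq_cons
  -- l nonempty
  have hlne : l ≠ [] := by
    intro h
    rw [h] at hsupp
    rw [← hsupp] at hcons
    simp at hcons
    exact hux hcons.symm
  refine ⟨l, x, hlne, ?_, ?_, ?_, ?_, hx⟩
  · -- head? = some u
    cases l with
    | nil => exact absurd rfl hlne
    | cons a t =>
      rw [← hsupp] at hcons
      simp at hcons
      simp [hcons]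
  · -- chain
    rw [hsupp]
    exact q.isChain_adj_support.imp (fun a b h => h.1)
  · have := hq.support_nodup
    rw [← hsupp] at this
    exact (List.nodup_append.mp this).1
  · intro y hy
    have hymem : y ∈ q.support := by rw [← hsupp]; exact List.mem_append_left _ hy
    refine ⟨hsupclosed y hymem, ?_⟩
    intro hyK'
    have hyx : y = x := hfirst y hymem hyK'
    have hnodup := hq.support_nodup
    rw [← hsupp] at hnodup
    exact (List.disjoint_of_nodup_append hnodup) hy (by simp [hyx])
end
/-- Every end of an infinite, locally finite, connected countable graph
is realized by an infinite injective path. Here an end is a map `ξ` assigning to each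
finite vertex set `K` an infinite connected component `ξ K` of its complement
(a component being the set of vertices reachable from some `v ∉ K` by paths avoiding
`K`), compatibly: `K ⊆ K' → ξ K' ⊆ ξ K`. The conclusion: there is an injective path
`c : ℕ → V` along edges of `G` that eventually lies in `ξ K` for every finite `K`. -/
theorem end_realized_by_injective_path
    {V : Type*} [Countable V] [Infinite V]
    (G : SimpleGraph V) (hconn : G.Connected) (hlf : G.LocallyFinite)
    (ξ : Finset V → Set V)
    (hcomp : ∀ K : Finset V, ∃ v : V, v ∉ K ∧
      ξ K = {u | Relation.ReflTransGen
        (fun a b => G.Adj a b ∧ a ∉ (K : Set V) ∧ b ∉ (K : Set V)) v u})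
    (hinf : ∀ K : Finset V, (ξ K).Infinite)
    (hmono : ∀ K K' : Finset V, K ⊆ K' → ξ K' ⊆ ξ K) :
    ∃ c : ℕ → V, Function.Injective c ∧ (∀ n, G.Adj (c n) (c (n + 1))) ∧
      ∀ K : Finset V, ∃ N, ∀ n ≥ N, c n ∈ ξ K := by
  classical
  obtain ⟨e, he⟩ := exists_surjective_nat V
  obtain ⟨v₀, hv₀⟩ := (hinf ∅).nonempty
  -- one construction step
  have step_ex : ∀ (s : {p : Finset V × V // p.2 ∈ ξ p.1}) (m : ℕ),
      ∃ (t : {p : Finset V × V // p.2 ∈ ξ p.1}) (l : List V),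
        s.1.1 ⊆ t.1.1 ∧ e m ∈ t.1.1 ∧ l ≠ [] ∧ l.head? = some s.1.2 ∧
        List.Chain' G.Adj (l ++ [t.1.2]) ∧ l.Nodup ∧
        (∀ x ∈ l, x ∈ ξ s.1.1 ∧ x ∉ ξ t.1.1) := by
    rintro ⟨⟨Kc, vc⟩, hvc⟩ m
    have hsub : Kc ⊆ Kc ∪ {e m, vc} := Finset.subset_union_left
    have hu' : vc ∈ Kc ∪ {e m, vc} := by simp
    obtain ⟨l, w, h1, h2, h3, h4, h5, h6⟩ :=
      seg_exists G ξ hcomp hinf hmono Kc (Kc ∪ {e m, vc}) hsub vc hvc hu'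
    exact ⟨⟨(Kc ∪ {e m, vc}, w), h6⟩, l, hsub, by simp, h1, h2, h3, h4, h5⟩
  let nxt : {p : Finset V × V // p.2 ∈ ξ p.1} → ℕ →
      ({p : Finset V × V // p.2 ∈ ξ p.1} × List V) :=
    fun s m => ⟨(step_ex s m).choose, (step_ex s m).choose_spec.choose⟩
  let F : ℕ → {p : Finset V × V // p.2 ∈ ξ p.1} :=
    fun n => Nat.rec ⟨(∅, v₀), hv₀⟩ (fun m s => (nxt s m).1) n
  let Kse : ℕ → Finset V := fun n => (F n).1.1
  let vse : ℕ → V := fun n => (F n).1.2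
  let L : ℕ → List V := fun n => (nxt (F n) n).2
  have spec : ∀ n, Kse n ⊆ Kse (n+1) ∧ e n ∈ Kse (n+1) ∧ L n ≠ [] ∧
      (L n).head? = some (vse n) ∧ List.Chain' G.Adj (L n ++ [vse (n+1)]) ∧
      (L n).Nodup ∧ (∀ x ∈ L n, x ∈ ξ (Kse n) ∧ x ∉ ξ (Kse (n+1))) := by
    intro n
    exact (step_ex (F n) n).choose_spec.choose_spec
  have hKmono : Monotone Kse := monotone_nat_of_le_succ (fun n => (spec n).1)
  have hximono : ∀ {m n : ℕ}, m ≤ n → ξ (Kse n) ⊆ ξ (Kse m) :=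
    fun h => hmono _ _ (hKmono h)
  -- segments are pairwise disjoint
  have hdisj : ∀ m n : ℕ, m < n → ∀ x, x ∈ L m → x ∈ L n → False := by
    intro m n hmn x hxm hxn
    have h1 : x ∈ ξ (Kse n) := ((spec n).2.2.2.2.2.2 x hxn).1
    have h2 : x ∉ ξ (Kse (m+1)) := ((spec m).2.2.2.2.2.2 x hxm).2
    exact h2 (hximono hmn h1)
  -- the machine
  let M : ℕ → List V × ℕ := fun k => Nat.rec (L 0, 0)
    (fun _ st => if st.1.length ≤ 1 then (L (st.2 + 1), st.2 + 1) else (st.1.tail, st.2)) k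
  have hMsucc : ∀ k, M (k+1) = if (M k).1.length ≤ 1
      then (L ((M k).2 + 1), (M k).2 + 1) else ((M k).1.tail, (M k).2) := fun k => rfl
  let c : ℕ → V := fun k => (M k).1.headD v₀
  have hInv : ∀ k, (M k).1 ≠ [] ∧ (M k).1 <:+ L ((M k).2) := by
    intro k
    induction k with
    | zero => exact ⟨(spec 0).2.2.1, List.suffix_refl _⟩
    | succ k ih =>
      rw [hMsucc k]
      by_cases h : (M k).1.length ≤ 1
      · rw [if_pos h]
        exact ⟨(spec ((M k).2 + 1)).2.2.1, List.suffix_refl (L ((M k).2 + 1))⟩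
      · rw [if_neg h]
        refine ⟨?_, (List.tail_suffix _).trans ih.2⟩
        have h2 : 1 < (M k).1.length := lt_of_not_ge h
        intro hnil
        have hnil' : (M k).1.tail = [] := hnil
        have := List.length_tail (l := (M k).1)
        rw [hnil'] at this
        simp at this
        omega
  have hhead : ∀ k, (M k).1.head? = some (c k) := by
    intro k
    have := (hInv k).1
    cases h : (M k).1 with
    | nil => exact absurd h this
    | cons a t => show _ = some ((M k).1.headD v₀); rw [h]; rfl
  have hstep : ∀ k, ((M (k+1)).2 = (M k).2 ∧ (M (k+1)).1.length + 1 = (M k).1.length)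
      ∨ ((M (k+1)).2 = (M k).2 + 1 ∧ (M k).1.length = 1) := by
    intro k
    by_cases h : (M k).1.length ≤ 1
    · right
      have h1 : (M k).1 ≠ [] := (hInv k).1
      have h2 : 0 < (M k).1.length := List.length_pos_iff.mpr h1
      rw [hMsucc k, if_pos h]
      exact ⟨rfl, by omega⟩
    · left
      rw [hMsucc k, if_neg h]
      refine ⟨rfl, ?_⟩
      have := List.length_tail (l := (M k).1)
      simp only [this]
      omega
  have hNmono : Monotone (fun k => (M k).2) := by
    apply monotone_nat_of_le_succ
    intro k
    rcases hstep k with ⟨h, _⟩ | ⟨h, _⟩ <;> omega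
  -- while segment index constant, remaining length decreases
  have hlen : ∀ j d, (M j).2 = (M (j+d)).2 → (M (j+d)).1.length + d = (M j).1.length := by
    intro j d
    induction d with
    | zero => intro _; rfl
    | succ d ih =>
      rw [Nat.add_succ]
      simp only [Nat.succ_eq_add_one]
      intro hEq
      have h1 : (M j).2 ≤ (M (j+d)).2 := hNmono (by omega)
      have h2 : (M (j+d)).2 ≤ (M (j+d+1)).2 := hNmono (Nat.le_succ _)
      have h3 : (M (j+d+1)).2 = (M j).2 := hEq.symm
      rcases hstep (j+d) with ⟨h4, h5⟩ | ⟨h4, _⟩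
      · have h6 := ih (by omega)
        omega
      · omega
  -- segment index eventually exceeds any bound
  have hseg_lt : ∀ k, (M k).2 < (M (k + (M k).1.length)).2 := by
    intro k
    have h1 : (M k).2 ≤ (M (k + (M k).1.length)).2 := hNmono (by omega)
    rcases eq_or_lt_of_le h1 with h2 | h2
    · exfalso
      have h3 := hlen k ((M k).1.length) h2
      have h4 : (M (k + (M k).1.length)).1 ≠ [] := (hInv _).1
      have h5 : 0 < (M (k + (M k).1.length)).1.length := List.length_pos_iff.mpr h4
      omega
    · exact h2
  have hunb : ∀ N, ∃ k, N ≤ (M k).2 := by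
    intro N
    induction N with
    | zero => exact ⟨0, Nat.zero_le _⟩
    | succ N ih =>
      obtain ⟨k, hk⟩ := ih
      exact ⟨k + (M k).1.length, by have := hseg_lt k; omega⟩
  have hcmem : ∀ k, c k ∈ L ((M k).2) := by
    intro k
    obtain ⟨hne, hsuf⟩ := hInv k
    have hmem : c k ∈ (M k).1 := by
      cases h : (M k).1 with
      | nil => exact absurd h hne
      | cons a t =>
        have h2 := hhead k
        rw [h] at h2
        simp only [List.head?_cons, Option.some_inj] at h2
        rw [← h2]
        exact List.mem_cons_self
    exact hsuf.sublist.mem hmem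
  refine ⟨c, ?_, ?_, ?_⟩
  · -- injectivity
    have key : ∀ k k', k < k' → c k ≠ c k' := by
      intro k k' hkk' hc
      rcases eq_or_lt_of_le (hNmono hkk'.le : (M k).2 ≤ (M k').2) with hn | hn
      · -- same segment
        have hlt : (M k').1.length < (M k).1.length := by
          have h1 := hlen k (k' - k) (by rw [Nat.add_sub_cancel' hkk'.le]; exact hn)
          rw [Nat.add_sub_cancel' hkk'.le] at h1
          omega
        have hn' : (M k).2 = (M k').2 := hn
        have h9 : (M k').1 <:+ L ((M k).2) := by rw [hn']; exact (hInv k').2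
        have := head_ne_of_suffix ((spec ((M k).2)).2.2.2.2.2.1)
          h9 ((hInv k).2) hlt (hhead k') (hhead k)
        exact this hc.symm
      · -- different segments
        exact hdisj _ _ hn (c k) (hcmem k) (hc ▸ hcmem k')
    intro k k' hc
    by_contra hne
    rcases lt_or_gt_of_ne hne with h | h
    · exact key k k' h hc
    · exact key k' k h hc.symm
  · -- adjacency
    intro k
    obtain ⟨hne, hsuf⟩ := hInv k
    have hchain : List.Chain' G.Adj ((M k).1 ++ [vse ((M k).2 + 1)]) := by
      refine ((spec ((M k).2)).2.2.2.2.1).suffix ?_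
      obtain ⟨s, hs⟩ := hsuf
      exact ⟨s, by rw [← List.append_assoc, hs]⟩
    cases h : (M k).1 with
    | nil => exact absurd h hne
    | cons a rest =>
      have hck : c k = a := by
        show (M k).1.headD v₀ = a
        rw [h]
        rfl
      cases rest with
      | nil =>
        -- new segment
        have hlen1 : (M k).1.length ≤ 1 := by rw [h]; simp
        have hM1 : M (k+1) = (L ((M k).2 + 1), (M k).2 + 1) := by
          rw [hMsucc k, if_pos hlen1]
        have hck1 : c (k+1) = vse ((M k).2 + 1) := by
          have hh := (spec ((M k).2 + 1)).2.2.2.1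
          show (M (k+1)).1.headD v₀ = _
          rw [hM1]
          show (L ((M k).2 + 1)).headD v₀ = _
          cases hL : L ((M k).2 + 1) with
          | nil => exact absurd hL ((spec ((M k).2 + 1)).2.2.1)
          | cons b t =>
            rw [hL] at hh
            simp only [List.head?_cons, Option.some_inj] at hh
            rw [hh]
            rfl
        rw [hck, hck1]
        rw [h] at hchain
        simp at hchain
        exact List.isChain_pair.mp hchain
      | cons b rest' =>
        have hlen1 : ¬ (M k).1.length ≤ 1 := by rw [h]; simp
        have hM1 : M (k+1) = ((M k).1.tail, (M k).2) := by rw [hMsucc k, if_neg hlen1]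
        have hck1 : c (k+1) = b := by
          show (M (k+1)).1.headD v₀ = _
          rw [hM1, h]
          rfl
        rw [hck, hck1]
        rw [h] at hchain
        simp only [List.cons_append, List.isChain_cons_cons] at hchain
        exact (List.isChain_cons_cons.mp hchain).1
  · -- eventually in ξ K
    intro K
    have hKN : ∃ N, K ⊆ Kse N := by
      refine ⟨(K.sup (fun x => (he x).choose)) + 1, ?_⟩
      intro x hx
      have h1 : e ((he x).choose) = x := (he x).choose_spec
      have h2 : (he x).choose ≤ K.sup (fun x => (he x).choose) :=
        Finset.le_sup (f := fun x => (he x).choose) hx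
      have h3 : e ((he x).choose) ∈ Kse ((he x).choose + 1) := (spec _).2.1
      rw [h1] at h3
      exact hKmono (Nat.succ_le_succ h2) h3
    obtain ⟨N, hN⟩ := hKN
    obtain ⟨k₀, hk₀⟩ := hunb N
    refine ⟨k₀, ?_⟩
    intro k hk
    have h1 : N ≤ (M k).2 := le_trans hk₀ (hNmono hk)
    have h2 : c k ∈ ξ (Kse ((M k).2)) := ((spec _).2.2.2.2.2.2 _ (hcmem k)).1
    exact hmono K (Kse N) hN (hximono h1 h2)
end
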